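/- For all n ≥ 1 and k ≥ 1, the following identity holds in the polynomial ring ℤ[x_1, …, x_k]: Σ_{μ ∈ wcomp_{n−1}, supp(μ) ⊆ [k]} |Lyn_μ| x^μ = Σ_{Υ ∈ Nor_n} e_{λ^{Lyn}(Υ)}(x_1, …, x_k). -/

import Mathlib

/-! Colored labeled binary trees.  Leaf labels are positive integers; colors are
natural numbers (the paper's color set ℙ = {1,2,…} is identified with ℕ via j ↦ j-1,
i.e. color index `i : ℕ` represents the paper's color `i+1`). -/

inductive CTree : Type
  | leaf (label : ℕ) : CTree
  | node (color : ℕ) (l r : CTree) : CTree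
deriving DecidableEq

namespace CTree

/-- leaf labels from left to right -/
def leavesList : CTree → List ℕ
  | leaf m => [m]
  | node _ l r => leavesList l ++ leavesList r

/-- the valency `v(x)`: smallest leaf label of the subtree -/
def minLeaf : CTree → ℕ
  | leaf m => m
  | node _ l r => min (minLeaf l) (minLeaf r)

/-- a tree is normalized if in every subtree the leftmost leaf carries the
smallest leaf label of the subtree. -/
def Normalized : CTree → Prop
  | leaf _ => True
  | node _ l r => Normalized l ∧ Normalized r ∧ minLeaf l < minLeaf r

/-- number of internal nodes with color `j` -/
def colorCount : CTree → ℕ → ℕ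
  | leaf _, _ => 0
  | node c l r, j => (if c = j then 1 else 0) + colorCount l j + colorCount r j

def isLeafB : CTree → Bool
  | leaf _ => true
  | node _ _ _ => false

def left : CTree → CTree
  | leaf m => leaf m
  | node _ l _ => l

def right : CTree → CTree
  | leaf m => leaf m
  | node _ _ r => r

def rootColor : CTree → ℕ
  | leaf _ => 0
  | node c _ _ => c

/-- the root of `T` is a Lyndon node: either the left child is a leaf
or `v(R(L(x))) > v(R(x))`. (Leaves count as Lyndon.) -/
def RootLyndonB (T : CTree) : Bool :=
  isLeafB T || isLeafB (left T) || decide (minLeaf (right T) < minLeaf (right (left T)))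

/-- colored Lyndon condition: every internal node that is not a Lyndon node
satisfies `color(L(x)) > color(x)` -/
def LynColored : CTree → Prop
  | leaf _ => True
  | node c l r => LynColored l ∧ LynColored r ∧
      (RootLyndonB (node c l r) = true ∨ c < rootColor l)

/-- colored comb condition: every internal node whose right child is internal
satisfies `color(x) > color(R(x))` -/
def CombColored : CTree → Prop
  | leaf _ => True
  | node c l r => CombColored l ∧ CombColored r ∧ (isLeafB r = true ∨ rootColor r < c)

/-- all colors equal to `0`: an (essentially) uncolored tree. -/
def Mono : CTree → Prop
  | leaf _ => True
  | node c l r => c = 0 ∧ Mono l ∧ Mono r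

/-- the tree has leaf label set `[n] = {1,…,n}` (each label once) -/
def OnSet (n : ℕ) (T : CTree) : Prop := T.leavesList.Perm ((List.range n).map (· + 1))

/-- `lynAux T = (b, m)`: `b` is the size of the block of `π^{Lyn}` containing the
root (`0` for a leaf) and `m` is the multiset of sizes of the other blocks. -/
def lynAux : CTree → ℕ × Multiset ℕ
  | leaf _ => (0, 0)
  | node c l r =>
    let bl := (lynAux l).1
    let ml := (lynAux l).2
    let br := (lynAux r).1
    let mr := (lynAux r).2
    let closedR := mr + (if br = 0 then 0 else {br})
    if RootLyndonB (node c l r) then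
      (1, ml + (if bl = 0 then 0 else {bl}) + closedR)
    else (1 + bl, ml + closedR)

/-- the Lyndon type `λ^{Lyn}`: multiset of block sizes of `π^{Lyn}` -/
def lynType (T : CTree) : Multiset ℕ :=
  (if (lynAux T).1 = 0 then (0 : Multiset ℕ) else {(lynAux T).1}) + (lynAux T).2

def combAux : CTree → ℕ × Multiset ℕ
  | leaf _ => (0, 0)
  | node _ l r =>
    let bl := (combAux l).1
    let ml := (combAux l).2
    let br := (combAux r).1
    let mr := (combAux r).2
    (1 + br, ml + mr + (if bl = 0 then 0 else {bl}))

/-- the comb type `λ^{Comb}`: multiset of block sizes of `π^{Comb}` -/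
def combType (T : CTree) : Multiset ℕ :=
  (if (combAux T).1 = 0 then (0 : Multiset ℕ) else {(combAux T).1}) + (combAux T).2

/-- subtrees (= nodes) of a tree -/
def subtreesC : CTree → List CTree
  | leaf m => [leaf m]
  | node c l r => node c l r :: (subtreesC l ++ subtreesC r)

end CTree

/-- normalized uncolored labeled binary trees on `[n]`: the set `Nor_n`. -/
def NorSet (n : ℕ) : Set CTree :=
  {T | T.OnSet n ∧ T.Normalized ∧ T.Mono}

/-- `Lyn_μ` for a weak composition `μ` (indexed by ℕ; `μ i` is the number of
internal nodes of color `i`). -/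
def LynSet (n : ℕ) (μ : ℕ →₀ ℕ) : Set CTree :=
  {T | T.OnSet n ∧ T.Normalized ∧ T.LynColored ∧ ∀ j, T.colorCount j = μ j}

/-- `Comb_μ` -/
def CombSet (n : ℕ) (μ : ℕ →₀ ℕ) : Set CTree :=
  {T | T.OnSet n ∧ T.Normalized ∧ T.CombColored ∧ ∀ j, T.colorCount j = μ j}

/-- `Lyn_μ` for `μ ∈ wcomp` with support in `[k]`, given as `f : Fin k → ℕ`. -/
def LynSetF (n k : ℕ) (f : Fin k → ℕ) : Set CTree :=
  {T | T.OnSet n ∧ T.Normalized ∧ T.LynColored ∧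
    ∀ j : ℕ, T.colorCount j = if h : j < k then f ⟨j, h⟩ else 0}

def CombSetF (n k : ℕ) (f : Fin k → ℕ) : Set CTree :=
  {T | T.OnSet n ∧ T.Normalized ∧ T.CombColored ∧
    ∀ j : ℕ, T.colorCount j = if h : j < k then f ⟨j, h⟩ else 0}

open MvPolynomial

/-- the elementary symmetric polynomial `e_m(x_1,…,x_k)` over ℤ -/
noncomputable def epoly (k m : ℕ) : MvPolynomial (Fin k) ℤ :=
  ∑ S ∈ Finset.powersetCard m (Finset.univ : Finset (Fin k)), ∏ i ∈ S, X i

/-- `e_λ = e_{λ₁} ⋯ e_{λ_r}` for an integer partition `λ` given as a multiset -/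
noncomputable def eprod (k : ℕ) (lam : Multiset ℕ) : MvPolynomial (Fin k) ℤ :=
  (lam.map (epoly k)).prod

/-! ### Auxiliary development -/

namespace LynAux

open CTree MvPolynomial Finset

/-- erase all colors -/
def shape : CTree → CTree
  | .leaf m => .leaf m
  | .node _ l r => .node 0 (shape l) (shape r)

/-- all colors are `< k` -/
def ColLt (k : ℕ) : CTree → Prop
  | .leaf _ => True
  | .node c l r => c < k ∧ ColLt k l ∧ ColLt k r

/-- number of internal nodes -/
def nodeCount : CTree → ℕ
  | .leaf _ => 0
  | .node _ l r => 1 + nodeCount l + nodeCount r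

/-- all recolorings of `T` with colors `< k` -/
def paints (k : ℕ) : CTree → Finset CTree
  | .leaf m => {.leaf m}
  | .node _ l r => ((Finset.range k) ×ˢ (paints k l ×ˢ paints k r)).image
      fun p => .node p.1 p.2.1 p.2.2

@[simp] lemma leaves_shape (T : CTree) : (shape T).leavesList = T.leavesList := by
  induction T <;> simp [shape, leavesList, *]

@[simp] lemma minLeaf_shape (T : CTree) : (shape T).minLeaf = T.minLeaf := by
  induction T <;> simp [shape, minLeaf, *]

@[simp] lemma isLeafB_shape (T : CTree) : (shape T).isLeafB = T.isLeafB := by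
  cases T <;> simp [shape, isLeafB]

@[simp] lemma right_shape (T : CTree) : (shape T).right = shape T.right := by
  cases T <;> simp [shape, right]

lemma normalized_shape (T : CTree) : (shape T).Normalized ↔ T.Normalized := by
  induction T <;> simp [shape, Normalized, *]

lemma mono_shape (T : CTree) : (shape T).Mono := by
  induction T <;> simp [shape, Mono, *]

lemma shape_shape (T : CTree) : shape (shape T) = shape T := by
  induction T <;> simp [shape, *]

lemma shape_eq_self_of_mono {T : CTree} (h : T.Mono) : shape T = T := by
  induction T with
  | leaf m => rfl
  | node c l r ihl ihr =>
      obtain ⟨hc, hl, hr⟩ := h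
      simp [shape, ihl hl, ihr hr, hc]

lemma minLeaf_eq_of_shape {a b : CTree} (h : shape a = shape b) : a.minLeaf = b.minLeaf := by
  rw [← minLeaf_shape a, ← minLeaf_shape b, h]

lemma isLeafB_eq_of_shape {a b : CTree} (h : shape a = shape b) : a.isLeafB = b.isLeafB := by
  rw [← isLeafB_shape a, ← isLeafB_shape b, h]

lemma right_shape_eq_of_shape {a b : CTree} (h : shape a = shape b) :
    shape a.right = shape b.right := by
  rw [← right_shape, ← right_shape, h]

lemma rootLyndonB_node (a : ℕ) (l r : CTree) :
    RootLyndonB (.node a l r) = (l.isLeafB || decide (r.minLeaf < l.right.minLeaf)) := by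
  simp [RootLyndonB, isLeafB, left, right]
  rfl

lemma rootLyndonB_congr {a a' : ℕ} {l l' r r' : CTree}
    (hl : shape l = shape l') (hr : shape r = shape r') :
    RootLyndonB (.node a l r) = RootLyndonB (.node a' l' r') := by
  rw [rootLyndonB_node, rootLyndonB_node, isLeafB_eq_of_shape hl, minLeaf_eq_of_shape hr,
    minLeaf_eq_of_shape (right_shape_eq_of_shape hl)]

lemma mem_paints {k : ℕ} : ∀ {T U : CTree}, U ∈ paints k T ↔ shape U = shape T ∧ ColLt k U := by
  intro T
  induction T with
  | leaf m =>
      intro U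
      constructor
      · intro hU
        simp only [paints, Finset.mem_singleton] at hU
        subst hU; exact ⟨rfl, trivial⟩
      · rintro ⟨hs, -⟩
        cases U with
        | leaf x => simp only [shape, CTree.leaf.injEq] at hs; simp [paints, hs]
        | node c l r => simp [shape] at hs
  | node c l r ihl ihr =>
      intro U
      constructor
      · intro hU
        simp only [paints, Finset.mem_image, Finset.mem_product, Finset.mem_range] at hU
        obtain ⟨⟨c', Ul, Ur⟩, ⟨hc', hUl, hUr⟩, rfl⟩ := hU
        refine ⟨?_, hc', (ihl.1 hUl).2, (ihr.1 hUr).2⟩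
        simp [shape, (ihl.1 hUl).1, (ihr.1 hUr).1]
      · rintro ⟨hs, hcol⟩
        cases U with
        | leaf x => simp [shape] at hs
        | node c' Ul Ur =>
            obtain ⟨hc', hcl, hcr⟩ := hcol
            simp only [shape, CTree.node.injEq] at hs
            simp only [paints, Finset.mem_image, Finset.mem_product, Finset.mem_range]
            exact ⟨(c', Ul, Ur), ⟨hc', ihl.2 ⟨hs.2.1, hcl⟩, ihr.2 ⟨hs.2.2, hcr⟩⟩, rfl⟩

lemma rootColor_lt_of_mem_paints {k : ℕ} (hk : 0 < k) {T U : CTree} (h : U ∈ paints k T) :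
    U.rootColor < k := by
  cases T with
  | leaf m =>
      simp only [paints, Finset.mem_singleton] at h
      subst h; simpa [rootColor] using hk
  | node c l r =>
      simp only [paints, Finset.mem_image, Finset.mem_product, Finset.mem_range] at h
      obtain ⟨⟨c', Ul, Ur⟩, ⟨hc', -, -⟩, rfl⟩ := h
      simpa [rootColor] using hc'

/-- monomial `x^{content U}` -/
noncomputable def mon (k : ℕ) (U : CTree) : MvPolynomial (Fin k) ℤ :=
  ∏ i : Fin k, X i ^ U.colorCount i

noncomputable def XN (k c : ℕ) : MvPolynomial (Fin k) ℤ :=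
  if h : c < k then X ⟨c, h⟩ else 0

lemma XN_of_lt {k c : ℕ} (h : c < k) : XN k c = X ⟨c, h⟩ := dif_pos h

lemma XN_of_le {k c : ℕ} (h : k ≤ c) : XN k c = 0 := dif_neg (by omega)

@[simp] lemma XN_fin {k : ℕ} (i : Fin k) : XN k i = X i := by
  rw [XN_of_lt i.isLt]

lemma mon_leaf (k m : ℕ) : mon k (.leaf m) = 1 := by
  simp [mon, colorCount]

lemma mon_node {k : ℕ} {c : ℕ} (hc : c < k) (l r : CTree) :
    mon k (.node c l r) = XN k c * mon k l * mon k r := by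
  have : ∀ i : Fin k, X (R := ℤ) i ^ (colorCount (.node c l r) i)
      = (X i ^ (if c = i.val then 1 else 0)) * X i ^ colorCount l i * X i ^ colorCount r i := by
    intro i; rw [← pow_add, ← pow_add]; rfl
  rw [mon, Finset.prod_congr rfl (fun i _ => this i), Finset.prod_mul_distrib,
    Finset.prod_mul_distrib]
  congr 1
  rw [mon]; congr 1
  rw [XN_of_lt hc]
  rw [Finset.prod_eq_single ⟨c, hc⟩]
  · simp
  · intro i _ hi
    have : ¬ (c = i.val) := fun h => hi (by ext; simp [← h])
    simp [this]
  · simp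

/-- the generating polynomial of an increasing chain of `b` colors starting at `c` -/
noncomputable def Echain (k : ℕ) : ℕ → ℕ → MvPolynomial (Fin k) ℤ
  | 0, _ => 1
  | b + 1, c =>
      XN k c * (if b = 0 then 1 else ∑ c' ∈ Finset.range k, if c < c' then Echain k b c' else 0)

/-- the generating polynomial of a colored tree with given root color -/
noncomputable def Hpoly (k : ℕ) : CTree → ℕ → MvPolynomial (Fin k) ℤ
  | .leaf _, c => if c = 0 then 1 else 0
  | .node c0 l r, c =>
      XN k c *
        (∑ c' ∈ Finset.range k,
          (if RootLyndonB (.node c0 l r) then Hpoly k l c'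
           else if c < c' then Hpoly k l c' else 0)) *
        (∑ c' ∈ Finset.range k, Hpoly k r c')

/-- subsets of `{i : Fin k | m ≤ i}` of size `b`, generating polynomial -/
noncomputable def fS (k b m : ℕ) : MvPolynomial (Fin k) ℤ :=
  ∑ S ∈ Finset.powersetCard b (Finset.univ.filter fun i : Fin k => m ≤ i.val), ∏ i ∈ S, X i

lemma fS_of_le {k b m : ℕ} (hb : b ≠ 0) (hm : k ≤ m) : fS k b m = 0 := by
  have h0 : (Finset.univ.filter fun i : Fin k => m ≤ i.val) = ∅ := by
    ext i; simp only [Finset.mem_filter, Finset.mem_univ, true_and, Finset.notMem_empty,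
      iff_false]
    omega
  rw [fS, h0, Finset.powersetCard_eq_empty.2 (by simpa using Nat.pos_of_ne_zero hb)]
  simp

lemma fS_step {k b m : ℕ} (hm : m < k) :
    fS k (b + 1) m = fS k (b + 1) (m + 1) + X ⟨m, hm⟩ * fS k b (m + 1) := by
  have hins : (Finset.univ.filter fun i : Fin k => m ≤ i.val)
      = insert ⟨m, hm⟩ (Finset.univ.filter fun i : Fin k => m + 1 ≤ i.val) := by
    ext i
    simp only [Finset.mem_filter, Finset.mem_univ, true_and, Finset.mem_insert, Fin.ext_iff]
    omega
  have hnot : (⟨m, hm⟩ : Fin k) ∉ (Finset.univ.filter fun i : Fin k => m + 1 ≤ i.val) := by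
    simp
  rw [fS, hins, Finset.powersetCard_succ_insert hnot, Finset.sum_union, fS, fS]
  · congr 1
    rw [Finset.sum_image (fun S hS S' hS' h => by
      have hS1 : (⟨m, hm⟩ : Fin k) ∉ S := fun hc =>
        hnot ((Finset.mem_powersetCard.1 hS).1 hc)
      have hS2 : (⟨m, hm⟩ : Fin k) ∉ S' := fun hc =>
        hnot ((Finset.mem_powersetCard.1 hS').1 hc)
      rw [← Finset.erase_insert hS1, ← Finset.erase_insert hS2, h])]
    rw [Finset.mul_sum]
    refine Finset.sum_congr rfl fun S hS => ?_
    rw [Finset.prod_insert (fun hc => hnot ((Finset.mem_powersetCard.1 hS).1 hc))]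
  · rw [Finset.disjoint_left]
    intro S hS1 hS2
    obtain ⟨S', hS', rfl⟩ := Finset.mem_image.1 hS2
    exact hnot ((Finset.mem_powersetCard.1 hS1).1 (Finset.mem_insert_self _ _))

lemma sum_XN_fS (k b : ℕ) : ∀ j m, k ≤ m + j →
    (∑ c ∈ Finset.range k, if m ≤ c then XN k c * fS k b (c + 1) else 0) = fS k (b + 1) m := by
  intro j
  induction j with
  | zero =>
      intro m hm
      rw [fS_of_le (Nat.succ_ne_zero b) (by omega)]
      exact Finset.sum_eq_zero fun c hc => by
        rw [if_neg]; rw [Finset.mem_range] at hc; omega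
  | succ j ih =>
      intro m hm
      by_cases hmk : k ≤ m
      · rw [fS_of_le (Nat.succ_ne_zero b) hmk]
        exact Finset.sum_eq_zero fun c hc => by
          rw [if_neg]; rw [Finset.mem_range] at hc; omega
      · push_neg at hmk
        have hsplit : ∀ c, (if m ≤ c then XN k c * fS k b (c + 1) else 0)
            = (if c = m then XN k m * fS k b (m + 1) else 0)
              + (if m + 1 ≤ c then XN k c * fS k b (c + 1) else 0) := by
          intro c
          rcases Nat.lt_trichotomy c m with h | h | h
          · rw [if_neg (by omega), if_neg (by omega), if_neg (by omega), add_zero]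
          · subst h
            rw [if_pos le_rfl, if_pos rfl, if_neg (by omega), add_zero]
          · rw [if_pos (by omega), if_neg (by omega), if_pos (by omega), zero_add]
        rw [Finset.sum_congr rfl fun c _ => hsplit c, Finset.sum_add_distrib,
          Finset.sum_ite_eq' (Finset.range k) m (fun _ => XN k m * fS k b (m + 1)),
          if_pos (Finset.mem_range.2 hmk), ih (m + 1) (by omega), fS_step hmk, XN_of_lt hmk,
          add_comm]

lemma sum_echain_ge (k b : ℕ) : ∀ m,
    (∑ c ∈ Finset.range k, if m ≤ c then Echain k (b + 1) c else 0) = fS k (b + 1) m := by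
  induction b with
  | zero =>
      intro m
      have : ∀ c, Echain k 1 c = XN k c * fS k 0 (c + 1) := by
        intro c
        rw [Echain, if_pos rfl, fS]
        simp
      rw [Finset.sum_congr rfl fun c _ => by rw [this c]]
      exact sum_XN_fS k 0 k m (by omega)
  | succ b ih =>
      intro m
      have : ∀ c, Echain k (b + 2) c = XN k c * fS k (b + 1) (c + 1) := by
        intro c
        rw [Echain, if_neg (Nat.succ_ne_zero b)]
        congr 1
        rw [← ih (c + 1)]
        exact Finset.sum_congr rfl fun c' _ =>
          if_congr Nat.lt_iff_add_one_le rfl rfl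
      rw [Finset.sum_congr rfl fun c _ => by rw [this c]]
      exact sum_XN_fS k (b + 1) k m (by omega)

lemma sum_echain (k : ℕ) {b : ℕ} (hb : b ≠ 0) :
    (∑ c ∈ Finset.range k, Echain k b c) = epoly k b := by
  obtain ⟨b', rfl⟩ : ∃ b', b = b' + 1 := ⟨b - 1, by omega⟩
  have := sum_echain_ge k b' 0
  simp only [Nat.zero_le, if_true] at this
  rw [this, fS, epoly]
  congr 1
  congr 1
  ext i; simp

lemma eprod_add (k : ℕ) (a b : Multiset ℕ) : eprod k (a + b) = eprod k a * eprod k b := by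
  simp [eprod]

lemma eprod_singleton (k b : ℕ) : eprod k {b} = epoly k b := by
  simp [eprod]

lemma lynAux_node_true {c : ℕ} {l r : CTree} (h : RootLyndonB (.node c l r) = true) :
    lynAux (.node c l r) = (1, (lynAux l).2 + (if (lynAux l).1 = 0 then 0 else {(lynAux l).1})
      + ((lynAux r).2 + (if (lynAux r).1 = 0 then 0 else {(lynAux r).1}))) := by
  simp [lynAux, h]

lemma lynAux_node_false {c : ℕ} {l r : CTree} (h : RootLyndonB (.node c l r) = false) :
    lynAux (.node c l r) = (1 + (lynAux l).1,
      (lynAux l).2 + ((lynAux r).2 + (if (lynAux r).1 = 0 then 0 else {(lynAux r).1}))) := by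
  simp [lynAux, h]

lemma lynAux_node_fst_ne (c : ℕ) (l r : CTree) : (lynAux (CTree.node c l r)).1 ≠ 0 := by
  cases h : RootLyndonB (.node c l r)
  · rw [lynAux_node_false h]; simp
  · rw [lynAux_node_true h]; simp

lemma hpoly_main (k : ℕ) (hk : 0 < k) (T : CTree) :
    (∑ c ∈ Finset.range k, Hpoly k T c) = eprod k T.lynType ∧
    (T.isLeafB = false → ∀ c,
      Hpoly k T c = Echain k T.lynAux.1 c * eprod k T.lynAux.2) := by
  induction T with
  | leaf m =>
      constructor
      · simp only [Hpoly]
        rw [Finset.sum_ite_eq' (Finset.range k) 0 (fun _ => (1 : MvPolynomial (Fin k) ℤ)),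
          if_pos (Finset.mem_range.2 hk)]
        simp [lynType, lynAux, eprod]
      · intro h; simp [isLeafB] at h
  | node c0 l r ihl ihr =>
      have key : ∀ c, Hpoly k (.node c0 l r) c
          = Echain k (lynAux (.node c0 l r)).1 c * eprod k (lynAux (.node c0 l r)).2 := by
        intro c
        cases hRL : RootLyndonB (.node c0 l r) with
        | true =>
            rw [lynAux_node_true hRL]
            have hbranch : (∑ c' ∈ Finset.range k,
                (if RootLyndonB (.node c0 l r) then Hpoly k l c'
                 else if c < c' then Hpoly k l c' else 0)) = eprod k l.lynType := by
              rw [Finset.sum_congr rfl fun c' _ => by rw [if_pos hRL], ihl.1]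
            rw [Hpoly, hbranch, ihr.1]
            rw [show Echain k 1 c = XN k c * 1 from by rw [Echain, if_pos rfl]]
            simp only [lynType, eprod_add]
            ring
        | false =>
            have hleaf : l.isLeafB = false := by
              rw [rootLyndonB_node] at hRL
              exact (Bool.or_eq_false_iff.1 hRL).1
            obtain ⟨b', hb'⟩ : ∃ b', (lynAux l).1 = b' + 1 := by
              cases l with
              | leaf m => simp [isLeafB] at hleaf
              | node cl ll lr => exact ⟨(lynAux (.node cl ll lr)).1 - 1,
                  by have := lynAux_node_fst_ne cl ll lr; omega⟩
            have hbranch : (∑ c' ∈ Finset.range k,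
                (if RootLyndonB (.node c0 l r) then Hpoly k l c'
                 else if c < c' then Hpoly k l c' else 0))
                = (∑ c' ∈ Finset.range k, if c < c' then Echain k (lynAux l).1 c' else 0)
                    * eprod k (lynAux l).2 := by
              rw [Finset.sum_mul]
              refine Finset.sum_congr rfl fun c' _ => ?_
              rw [if_neg (by simp [hRL]), ihl.2 hleaf c', ite_mul, zero_mul]
            rw [lynAux_node_false hRL, Hpoly, hbranch, ihr.1]
            have hech : Echain k (1 + (lynAux l).1) c
                = XN k c * ∑ c' ∈ Finset.range k, if c < c' then Echain k (lynAux l).1 c' else 0 := by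
              rw [hb', show 1 + (b' + 1) = (b' + 1) + 1 from by omega, Echain,
                if_neg (Nat.succ_ne_zero b')]
            rw [hech]
            simp only [lynType, eprod_add]
            ring
      refine ⟨?_, fun _ => key⟩
      rw [Finset.sum_congr rfl fun c _ => key c, ← Finset.sum_mul,
        sum_echain k (lynAux_node_fst_ne c0 l r), lynType,
        if_neg (lynAux_node_fst_ne c0 l r), eprod_add, eprod_singleton]

noncomputable def ite0 (k : ℕ) (p : Prop) (a : MvPolynomial (Fin k) ℤ) :
    MvPolynomial (Fin k) ℤ :=
  @ite _ p (Classical.propDecidable p) a 0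

lemma ite0_pos {k : ℕ} {p : Prop} (h : p) (a : MvPolynomial (Fin k) ℤ) : ite0 k p a = a := by
  rw [ite0, if_pos h]

lemma ite0_neg {k : ℕ} {p : Prop} (h : ¬ p) (a : MvPolynomial (Fin k) ℤ) : ite0 k p a = 0 := by
  rw [ite0, if_neg h]

lemma ite_eq_ite0 {k : ℕ} (p : Prop) [Decidable p] (a : MvPolynomial (Fin k) ℤ) :
    (if p then a else 0) = ite0 k p a := by
  by_cases h : p
  · rw [if_pos h, ite0_pos h]
  · rw [if_neg h, ite0_neg h]

lemma ite0_congr {k : ℕ} {p p' : Prop} (h : p ↔ p') (a : MvPolynomial (Fin k) ℤ) :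
    ite0 k p a = ite0 k p' a := by
  by_cases hp : p
  · rw [ite0_pos hp, ite0_pos (h.1 hp)]
  · rw [ite0_neg hp, ite0_neg (fun hc => hp (h.2 hc))]

open scoped Classical in
lemma sum_paints_q {k : ℕ} (hk : 0 < k) {T : CTree}
    (hT : ∀ c, (∑ U ∈ (paints k T).filter (fun U => U.LynColored ∧ U.rootColor = c), mon k U)
      = Hpoly k T c) (q : ℕ → Prop) :
    (∑ U ∈ paints k T, ite0 k (U.LynColored ∧ q U.rootColor) (mon k U))
      = ∑ c ∈ Finset.range k, ite0 k (q c) (Hpoly k T c) := by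
  have step1 : ∀ c, ite0 k (q c) (Hpoly k T c)
      = ∑ U ∈ paints k T, ite0 k (U.LynColored ∧ U.rootColor = c ∧ q c) (mon k U) := by
    intro c
    by_cases hq : q c
    · rw [ite0_pos hq, ← hT c, Finset.sum_filter]
      exact Finset.sum_congr rfl fun U _ => by
        rw [ite_eq_ite0]
        exact ite0_congr (by tauto) _
    · rw [ite0_neg hq]
      exact (Finset.sum_eq_zero fun U _ => ite0_neg (by tauto) _).symm
  have hR : (∑ c ∈ Finset.range k, ite0 k (q c) (Hpoly k T c))
      = ∑ c ∈ Finset.range k, ∑ U ∈ paints k T,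
          ite0 k (U.LynColored ∧ U.rootColor = c ∧ q c) (mon k U) :=
    Finset.sum_congr rfl fun c _ => step1 c
  rw [hR, Finset.sum_comm]
  refine Finset.sum_congr rfl fun U hU => ?_
  have hroot : U.rootColor ∈ Finset.range k :=
    Finset.mem_range.2 (rootColor_lt_of_mem_paints hk hU)
  by_cases hL : U.LynColored ∧ q U.rootColor
  · rw [ite0_pos hL, Finset.sum_eq_single U.rootColor
      (fun c _ hc => ite0_neg (fun h => hc (h.2.1.symm)) _)
      (fun h => absurd hroot h)]
    rw [ite0_pos ⟨hL.1, rfl, hL.2⟩]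
  · rw [ite0_neg hL]
    exact (Finset.sum_eq_zero fun c _ =>
      ite0_neg (fun h => hL ⟨h.1, by rw [h.2.1]; exact h.2.2⟩) _).symm

open scoped Classical in
lemma sum_paints_filter {k : ℕ} (hk : 0 < k) : ∀ (T : CTree) (c : ℕ),
    (∑ U ∈ (paints k T).filter (fun U => U.LynColored ∧ U.rootColor = c), mon k U)
      = Hpoly k T c := by
  intro T
  induction T with
  | leaf m =>
      intro c
      rw [paints, Finset.filter_singleton]
      by_cases hc : c = 0
      · subst hc
        rw [if_pos ⟨trivial, rfl⟩, Finset.sum_singleton, mon_leaf]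
        simp [Hpoly]
      · rw [if_neg (fun h => hc ((h.2).symm)), Finset.sum_empty]
        simp [Hpoly, hc]
  | node c0 l r ihl ihr =>
      intro c
      have hinj : ∀ p ∈ (Finset.range k) ×ˢ (paints k l ×ˢ paints k r),
          ∀ p' ∈ (Finset.range k) ×ˢ (paints k l ×ˢ paints k r),
          (CTree.node p.1 p.2.1 p.2.2 : CTree) = CTree.node p'.1 p'.2.1 p'.2.2 → p = p' := by
        rintro ⟨a, b, d⟩ - ⟨a', b', d'⟩ - h
        simp only [CTree.node.injEq] at h
        obtain ⟨h1, h2, h3⟩ := h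
        simp [h1, h2, h3, Prod.ext_iff]
      rw [Finset.sum_filter]
      rw [Finset.sum_congr rfl fun U (_ : U ∈ paints k (.node c0 l r)) =>
        ite_eq_ite0 (U.LynColored ∧ U.rootColor = c) (mon k U)]
      rw [paints, Finset.sum_image hinj, Finset.sum_product]
      simp only [Finset.sum_product]
      by_cases hck : c < k
      · rw [Finset.sum_eq_single c
          (fun c' _ hc' => Finset.sum_eq_zero fun Ul _ => Finset.sum_eq_zero fun Ur _ =>
            ite0_neg (fun h => hc' h.2) _)
          (fun h => absurd (Finset.mem_range.2 hck) h)]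
        cases hRL : RootLyndonB (.node c0 l r) with
        | true =>
            have hpoint : ∀ Ul ∈ paints k l, ∀ Ur ∈ paints k r,
                ite0 k ((CTree.node c Ul Ur).LynColored ∧ (CTree.node c Ul Ur).rootColor = c)
                  (mon k (.node c Ul Ur))
                = (XN k c * ite0 k (Ul.LynColored ∧ True) (mon k Ul))
                    * ite0 k (Ur.LynColored ∧ True) (mon k Ur) := by
              intro Ul hUl Ur hUr
              have hRL' : RootLyndonB (.node c Ul Ur) = true := by
                rw [rootLyndonB_congr (mem_paints.1 hUl).1 (mem_paints.1 hUr).1, hRL]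
              by_cases h1 : Ul.LynColored
              · by_cases h2 : Ur.LynColored
                · rw [ite0_pos ⟨⟨h1, h2, Or.inl hRL'⟩, rfl⟩, ite0_pos ⟨h1, trivial⟩,
                    ite0_pos ⟨h2, trivial⟩, mon_node hck]
                · rw [ite0_neg (fun h => h2 h.1.2.1) _,
                    ite0_neg (show ¬ (Ur.LynColored ∧ True) from fun h => h2 h.1) _, mul_zero]
              · rw [ite0_neg (fun h => h1 h.1.1) _,
                    ite0_neg (show ¬ (Ul.LynColored ∧ True) from fun h => h1 h.1) _, mul_zero,
                    zero_mul]
            rw [Finset.sum_congr rfl fun Ul hUl =>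
              Finset.sum_congr rfl fun Ur hUr => hpoint Ul hUl Ur hUr]
            have hl' := sum_paints_q hk ihl (fun _ => True)
            have hr' := sum_paints_q hk ihr (fun _ => True)
            beta_reduce at hl' hr'
            rw [← Finset.sum_mul_sum, ← Finset.mul_sum, hl', hr', Hpoly]
            congr 1
            · congr 1
              exact Finset.sum_congr rfl fun c' _ => by
                rw [ite0_pos trivial, if_pos hRL]
            · exact Finset.sum_congr rfl fun c' _ => by rw [ite0_pos trivial]
        | false =>
            have hpoint : ∀ Ul ∈ paints k l, ∀ Ur ∈ paints k r,
                ite0 k ((CTree.node c Ul Ur).LynColored ∧ (CTree.node c Ul Ur).rootColor = c)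
                  (mon k (.node c Ul Ur))
                = (XN k c * ite0 k (Ul.LynColored ∧ c < Ul.rootColor) (mon k Ul))
                    * ite0 k (Ur.LynColored ∧ True) (mon k Ur) := by
              intro Ul hUl Ur hUr
              have hRL' : RootLyndonB (.node c Ul Ur) = false := by
                rw [rootLyndonB_congr (mem_paints.1 hUl).1 (mem_paints.1 hUr).1, hRL]
              by_cases h1 : Ul.LynColored ∧ c < Ul.rootColor
              · by_cases h2 : Ur.LynColored
                · rw [ite0_pos ⟨⟨h1.1, h2, Or.inr h1.2⟩, rfl⟩, ite0_pos h1,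
                    ite0_pos ⟨h2, trivial⟩, mon_node hck]
                · rw [ite0_neg (fun h => h2 h.1.2.1) _,
                    ite0_neg (show ¬ (Ur.LynColored ∧ True) from fun h => h2 h.1) _, mul_zero]
              · have e1 : ¬ ((CTree.node c Ul Ur).LynColored
                    ∧ (CTree.node c Ul Ur).rootColor = c) := by
                  rintro ⟨⟨hl1, hl2, hl3⟩, -⟩
                  rcases hl3 with h | h
                  · rw [hRL'] at h; exact Bool.false_ne_true h
                  · exact h1 ⟨hl1, h⟩
                rw [ite0_neg e1 _, ite0_neg h1 _, mul_zero, zero_mul]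
            rw [Finset.sum_congr rfl fun Ul hUl =>
              Finset.sum_congr rfl fun Ur hUr => hpoint Ul hUl Ur hUr]
            have hl' := sum_paints_q hk ihl (fun c' => c < c')
            have hr' := sum_paints_q hk ihr (fun _ => True)
            beta_reduce at hl' hr'
            rw [← Finset.sum_mul_sum, ← Finset.mul_sum, hl', hr', Hpoly]
            congr 1
            · congr 1
              refine Finset.sum_congr rfl fun c' _ => ?_
              rw [if_neg (show ¬ ((CTree.node c0 l r).RootLyndonB = true) from by simp [hRL]),
                ite_eq_ite0]
            · exact Finset.sum_congr rfl fun c' _ => by rw [ite0_pos trivial]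
      · have h0 : XN k c = 0 := XN_of_le (by omega)
        rw [Hpoly, h0, zero_mul, zero_mul]
        exact Finset.sum_eq_zero fun c' hc' => Finset.sum_eq_zero fun Ul _ =>
          Finset.sum_eq_zero fun Ur _ => ite0_neg (fun h => by
            rw [Finset.mem_range] at hc'
            have : (CTree.node c' Ul Ur).rootColor = c' := rfl
            omega) _

lemma leaves_length (T : CTree) : T.leavesList.length = nodeCount T + 1 := by
  induction T with
  | leaf m => simp [leavesList, nodeCount]
  | node c l r ihl ihr => simp [leavesList, nodeCount, ihl, ihr]; omega

lemma sum_colorCount {k : ℕ} {U : CTree} (h : ColLt k U) :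
    (∑ i : Fin k, U.colorCount i) = nodeCount U := by
  induction U with
  | leaf m => simp [colorCount, nodeCount]
  | node c l r ihl ihr =>
      obtain ⟨hc, hcl, hcr⟩ := h
      have hform : ∀ i : Fin k, colorCount (.node c l r) i
          = (if c = i.val then 1 else 0) + (colorCount l i + colorCount r i) := by
        intro i; rw [colorCount]; omega
      rw [Finset.sum_congr rfl fun i _ => hform i, Finset.sum_add_distrib,
        Finset.sum_add_distrib, ihl hcl, ihr hcr]
      have hone : (∑ i : Fin k, if c = i.val then 1 else 0) = 1 := by
        rw [Finset.sum_eq_single ⟨c, hc⟩]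
        · simp
        · intro i _ hi
          exact if_neg (fun hh => hi (by ext; simp [← hh]))
        · simp
      rw [hone, nodeCount]
      omega

lemma colorCount_zero_of_colLt {k : ℕ} {U : CTree} (h : ColLt k U) {j : ℕ} (hj : k ≤ j) :
    U.colorCount j = 0 := by
  induction U with
  | leaf m => rfl
  | node c l r ihl ihr =>
      obtain ⟨hc, hcl, hcr⟩ := h
      rw [colorCount, ihl hcl, ihr hcr, if_neg (by omega)]

lemma colLt_of_counts {k : ℕ} {U : CTree} (h : ∀ j, k ≤ j → U.colorCount j = 0) :
    ColLt k U := by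
  induction U with
  | leaf m => trivial
  | node c l r ihl ihr =>
      have hc : c < k := by
        by_contra hcc
        have := h c (by omega)
        rw [colorCount, if_pos rfl] at this
        omega
      refine ⟨hc, ihl fun j hj => ?_, ihr fun j hj => ?_⟩ <;>
      · have := h j hj
        rw [colorCount] at this
        omega

lemma colLt_one_of_mono {U : CTree} (h : U.Mono) : ColLt 1 U := by
  induction U with
  | leaf m => trivial
  | node c l r ihl ihr =>
      obtain ⟨hc, hl, hr⟩ := h
      exact ⟨by omega, ihl hl, ihr hr⟩

lemma finite_trees (n k : ℕ) : ∀ m,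
    {T : CTree | (∀ x ∈ T.leavesList, x ≤ n) ∧ ColLt k T ∧ T.leavesList.length = m}.Finite := by
  intro m
  induction m using Nat.strong_induction_on with
  | _ m ih =>
    match m with
    | 0 =>
        refine Set.Finite.subset Set.finite_empty ?_
        rintro T ⟨-, -, hlen⟩
        rw [leaves_length] at hlen
        omega
    | 1 =>
        refine Set.Finite.subset ((Set.finite_Iic n).image CTree.leaf) ?_
        rintro T ⟨hlab, -, hlen⟩
        cases T with
        | leaf x => exact ⟨x, hlab x (by simp [leavesList]), rfl⟩
        | node c l r =>
            rw [leaves_length] at hlen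
            rw [nodeCount] at hlen
            omega
    | (m + 2) =>
        refine Set.Finite.subset
          (Set.Finite.biUnion (Set.finite_Iio k) fun c _ =>
            Set.Finite.biUnion (Set.finite_Icc 1 (m + 1)) fun a ha =>
              Set.Finite.image2 (CTree.node c) (ih a (by
                  simp only [Set.mem_Icc] at ha; omega))
                (ih (m + 2 - a) (by simp only [Set.mem_Icc] at ha; omega))) ?_
        rintro T ⟨hlab, hcol, hlen⟩
        cases T with
        | leaf x => simp [leavesList] at hlen
        | node c l r =>
            obtain ⟨hc, hcl, hcr⟩ := hcol
            have hlql : 1 ≤ l.leavesList.length := by rw [leaves_length]; omega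
            have hlqr : 1 ≤ r.leavesList.length := by rw [leaves_length]; omega
            have hsum : l.leavesList.length + r.leavesList.length = m + 2 := by
              rw [leavesList] at hlen
              simpa using hlen
            refine Set.mem_biUnion (show c ∈ Set.Iio k from hc) ?_
            refine Set.mem_biUnion
              (show l.leavesList.length ∈ Set.Icc 1 (m + 1) from ⟨hlql, by omega⟩) ?_
            refine Set.mem_image2_of_mem ⟨fun x hx => hlab x ?_, hcl, rfl⟩
              ⟨fun x hx => hlab x ?_, hcr, by omega⟩
            · rw [leavesList]; exact List.mem_append_left _ hx
            · rw [leavesList]; exact List.mem_append_right _ hx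

lemma onSet_length {n : ℕ} {T : CTree} (h : T.OnSet n) : T.leavesList.length = n := by
  rw [h.length_eq]; simp

lemma finite_NorSet (n : ℕ) : (NorSet n).Finite := by
  refine Set.Finite.subset (finite_trees n 1 n) ?_
  rintro T ⟨hOn, hN, hM⟩
  refine ⟨fun x hx => ?_, colLt_one_of_mono hM, onSet_length hOn⟩
  have := hOn.mem_iff.1 hx
  simp only [List.mem_map, List.mem_range] at this
  obtain ⟨i, hi, rfl⟩ := this
  omega

/-- the finset of normalized mono trees on `[n]` -/
noncomputable def NF (n : ℕ) : Finset CTree := (finite_NorSet n).toFinset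

open scoped Classical in
/-- the finset of all normalized colored Lyndon trees on `[n]` with colors `< k` -/
noncomputable def UF (n k : ℕ) : Finset CTree :=
  (NF n).biUnion fun T => (paints k T).filter fun U => U.LynColored

open scoped Classical in
lemma mem_UF {n k : ℕ} {U : CTree} :
    U ∈ UF n k ↔ U.OnSet n ∧ U.Normalized ∧ U.LynColored ∧ ColLt k U := by
  constructor
  · intro hU
    obtain ⟨T, hT, hUT⟩ := Finset.mem_biUnion.1 hU
    rw [NF, Set.Finite.mem_toFinset] at hT
    obtain ⟨hOn, hN, hM⟩ := hT
    rw [Finset.mem_filter] at hUT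
    obtain ⟨hUp, hLyn⟩ := hUT
    obtain ⟨hsh, hcol⟩ := mem_paints.1 hUp
    rw [shape_eq_self_of_mono hM] at hsh
    have hleq : U.leavesList = T.leavesList := by
      rw [← leaves_shape U, hsh]
    refine ⟨?_, ?_, hLyn, hcol⟩
    · rw [OnSet, hleq]; exact hOn
    · rw [← normalized_shape, hsh]; exact hN
  · rintro ⟨hOn, hN, hLyn, hcol⟩
    refine Finset.mem_biUnion.2 ⟨shape U, ?_, Finset.mem_filter.2 ⟨?_, hLyn⟩⟩
    · rw [NF, Set.Finite.mem_toFinset]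
      refine ⟨?_, by rw [normalized_shape]; exact hN, mono_shape U⟩
      rw [OnSet, leaves_shape]; exact hOn
    · exact mem_paints.2 ⟨(shape_shape U).symm, hcol⟩

open scoped Classical in
/-- trees in `UF n k` with color content `f` -/
noncomputable def Ff (n k : ℕ) (f : Fin k → ℕ) : Finset CTree :=
  (UF n k).filter fun U => ∀ i : Fin k, U.colorCount i = f i

open scoped Classical in
lemma mem_Ff {n k : ℕ} {f : Fin k → ℕ} {U : CTree} :
    U ∈ Ff n k f ↔ U ∈ UF n k ∧ ∀ i : Fin k, U.colorCount i = f i := by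
  rw [Ff]; exact Finset.mem_filter

lemma lynSetF_eq (n k : ℕ) (f : Fin k → ℕ) :
    LynSetF n k f = ↑(Ff n k f) := by
  ext U
  simp only [LynSetF, Set.mem_setOf_eq, Finset.mem_coe, mem_Ff, mem_UF]
  constructor
  · rintro ⟨hOn, hN, hLyn, hcnt⟩
    have hcol : ColLt k U := colLt_of_counts fun j hj => by rw [hcnt j, dif_neg (by omega)]
    refine ⟨⟨hOn, hN, hLyn, hcol⟩, fun i => ?_⟩
    rw [hcnt i, dif_pos i.isLt]
  · rintro ⟨⟨hOn, hN, hLyn, hcol⟩, hcnt⟩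
    refine ⟨hOn, hN, hLyn, fun j => ?_⟩
    by_cases hj : j < k
    · rw [dif_pos hj, ← hcnt ⟨j, hj⟩]
    · rw [dif_neg hj, colorCount_zero_of_colLt hcol (by omega)]

open scoped Classical in
lemma sum_Lc {k : ℕ} (hk : 0 < k) (T : CTree) :
    (∑ U ∈ (paints k T).filter (fun U => U.LynColored), mon k U) = eprod k T.lynType := by
  rw [Finset.sum_filter,
    Finset.sum_congr rfl fun U (_ : U ∈ paints k T) => ite_eq_ite0 U.LynColored (mon k U),
    Finset.sum_congr rfl fun U (_ : U ∈ paints k T) =>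
      ite0_congr (show U.LynColored ↔ U.LynColored ∧ True by tauto) (mon k U)]
  have h := sum_paints_q hk (sum_paints_filter hk T) (fun _ => True)
  beta_reduce at h
  rw [h, Finset.sum_congr rfl fun c (_ : c ∈ Finset.range k) => ite0_pos trivial (Hpoly k T c)]
  exact (hpoly_main k hk T).1

end LynAux

open LynAux

/-- `Σ_{μ ∈ wcomp_{n-1}, supp(μ) ⊆ [k]} |Lyn_μ| x^μ = Σ_{Υ ∈ Nor_n} e_{λ^{Lyn}(Υ)}`
in `ℤ[x_1,…,x_k]`.  Here a weak composition `μ` with `supp(μ) ⊆ [k]` is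
represented by `f : Fin k → ℕ`, and `x^μ = Π xᵢ^{f i}`. -/
theorem lyndon_generating_function_eq_lynType_sum (n k : ℕ) (hn : 1 ≤ n) (hk : 1 ≤ k) :
    (∑ f ∈ Finset.Nat.antidiagonalTuple k (n - 1),
        (Nat.card (LynSetF n k f) : MvPolynomial (Fin k) ℤ) * ∏ i, X i ^ f i) =
      ∑ᶠ T ∈ NorSet n, eprod k (CTree.lynType T) := by
  classical
  have hk0 : 0 < k := hk
  have hNFcoe : (NorSet n) = ↑(NF n) := by rw [NF, Set.Finite.coe_toFinset]
  rw [hNFcoe, finsum_mem_coe_finset]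
  have hterm : ∀ f ∈ Finset.Nat.antidiagonalTuple k (n - 1),
      (Nat.card (LynSetF n k f) : MvPolynomial (Fin k) ℤ) * ∏ i, X i ^ f i
        = ∑ U ∈ Ff n k f, mon k U := by
    intro f _
    have hcard : Nat.card (LynSetF n k f) = (Ff n k f).card := by
      rw [lynSetF_eq n k f, Nat.card_coe_set_eq, Set.ncard_coe_finset]
    have hmon : ∀ U ∈ Ff n k f, mon k U = ∏ i, X i ^ f i := by
      intro U hU
      exact Finset.prod_congr rfl fun i _ => by rw [(mem_Ff.1 hU).2 i]
    calc (Nat.card (LynSetF n k f) : MvPolynomial (Fin k) ℤ) * ∏ i, X i ^ f i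
        = ((Ff n k f).card : MvPolynomial (Fin k) ℤ) * ∏ i, X i ^ f i := by rw [hcard]
      _ = ∑ _U ∈ Ff n k f, ∏ i, X i ^ f i := by rw [Finset.sum_const, nsmul_eq_mul]
      _ = ∑ U ∈ Ff n k f, mon k U := Finset.sum_congr rfl fun U hU => (hmon U hU).symm
  rw [Finset.sum_congr rfl hterm]
  have hUeq : UF n k = (Finset.Nat.antidiagonalTuple k (n - 1)).biUnion (Ff n k) := by
    ext U
    simp only [Finset.mem_biUnion]
    constructor
    · intro hU
      refine ⟨fun i => U.colorCount i, ?_, mem_Ff.2 ⟨hU, fun i => rfl⟩⟩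
      rw [Finset.Nat.mem_antidiagonalTuple]
      obtain ⟨hOn, -, -, hcol⟩ := mem_UF.1 hU
      have h1 := sum_colorCount hcol
      have h2 := leaves_length U
      have h3 := onSet_length hOn
      rw [show (∑ i : Fin k, (fun i : Fin k => U.colorCount i.val) i)
        = nodeCount U from h1]
      omega
    · rintro ⟨f, -, hUf⟩
      exact (mem_Ff.1 hUf).1
  have hdisj1 : ∀ f ∈ Finset.Nat.antidiagonalTuple k (n - 1),
      ∀ g ∈ Finset.Nat.antidiagonalTuple k (n - 1), f ≠ g →
        Disjoint (Ff n k f) (Ff n k g) := by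
    intro f _ g _ hfg
    rw [Finset.disjoint_left]
    intro U hUf hUg
    exact hfg (funext fun i => by rw [← (mem_Ff.1 hUf).2 i, (mem_Ff.1 hUg).2 i])
  rw [← Finset.sum_biUnion hdisj1, ← hUeq]
  have hdisj2 : ∀ T ∈ NF n, ∀ T' ∈ NF n, T ≠ T' →
      Disjoint ((paints k T).filter fun U => U.LynColored)
        ((paints k T').filter fun U => U.LynColored) := by
    intro T hT T' hT' hne
    rw [Finset.disjoint_left]
    intro U hU1 hU2
    have h1 := (mem_paints.1 (Finset.mem_filter.1 hU1).1).1
    have h2 := (mem_paints.1 (Finset.mem_filter.1 hU2).1).1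
    rw [NF, Set.Finite.mem_toFinset] at hT hT'
    rw [shape_eq_self_of_mono hT.2.2] at h1
    rw [shape_eq_self_of_mono hT'.2.2] at h2
    exact hne (h1.symm.trans h2)
  rw [UF, Finset.sum_biUnion hdisj2]
  exact Finset.sum_congr rfl fun T _ => sum_Lc hk0 T
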